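/- Let F be a finite field such that 3 does not divide |F| − 1, and let t be a generator of the multiplicative group F^×. Then the subgroup of SL_3(F) generated by the three elementary matrices e_{12}(t), e_{23}(t), e_{31}(t) is all of SL_3(F). -/

import Mathlib

open Matrix

/-- The 3×3 elementary (transvection) matrix `e_{ij}(α) = I + α·E_{ij}`. -/
def elemMat {R : Type*} [CommRing R] (i j : Fin 3) (α : R) : Matrix (Fin 3) (Fin 3) R :=
  1 + Matrix.single i j α

theorem elemMat_det {R : Type*} [CommRing R] (i j : Fin 3) (hij : i ≠ j) (α : R) :
    (elemMat i j α).det = 1 := by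
  fin_cases i <;> fin_cases j <;>
    simp_all [elemMat, Matrix.det_fin_three, Matrix.single, Matrix.one_apply]

/-- The elementary matrix `e_{ij}(α)` as an element of `SL₃(R)` (for `i ≠ j`). -/
def elemSL {R : Type*} [CommRing R] (i j : Fin 3) (hij : i ≠ j) (α : R) :
    Matrix.SpecialLinearGroup (Fin 3) R :=
  ⟨elemMat i j α, elemMat_det i j hij α⟩

lemma elemSL_mul {R : Type*} [CommRing R] (i j : Fin 3) (hij : i ≠ j) (α β : R) :
    elemSL i j hij α * elemSL i j hij β = elemSL i j hij (α + β) := by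
  apply Subtype.ext
  show elemMat i j α * elemMat i j β = elemMat i j (α + β)
  simp [elemMat, add_mul, mul_add, Matrix.single_mul_single_of_ne _ _ _ _ hij.symm,
    Matrix.single_add, add_assoc]

lemma elemSL_zero {R : Type*} [CommRing R] (i j : Fin 3) (hij : i ≠ j) :
    elemSL i j hij (0 : R) = 1 := by
  apply Subtype.ext
  show elemMat i j (0 : R) = 1
  simp [elemMat]

lemma elemSL_inv {R : Type*} [CommRing R] (i j : Fin 3) (hij : i ≠ j) (α : R) :
    (elemSL i j hij α)⁻¹ = elemSL i j hij (-α) := by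
  rw [eq_comm, eq_inv_iff_mul_eq_one, elemSL_mul, neg_add_cancel, elemSL_zero]

lemma stdBasisMatrix_neg {R : Type*} [CommRing R] (a b : Fin 3) (c : R) :
    Matrix.single a b (-c) = -Matrix.single a b c := by
  ext x y
  simp [Matrix.single, apply_ite]
  split <;> simp_all

lemma elemSL_comm {R : Type*} [CommRing R] (i j k : Fin 3) (hij : i ≠ j) (hjk : j ≠ k)
    (hik : i ≠ k) (α β : R) :
    elemSL i k hik (α * β) =
      elemSL i j hij (-α) * elemSL j k hjk (-β) * elemSL i j hij α * elemSL j k hjk β := by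
  apply Subtype.ext
  show elemMat i k (α * β) = elemMat i j (-α) * elemMat j k (-β) * elemMat i j α * elemMat j k β
  simp only [elemMat, add_mul, mul_add, one_mul, mul_one,
    Matrix.single_mul_single_of_ne _ _ _ _ hij.symm,
    Matrix.single_mul_single_of_ne _ _ _ _ hjk.symm,
    Matrix.single_mul_single_of_ne _ _ _ _ (Ne.symm hik),
    Matrix.single_mul_single_of_ne _ _ _ _ hik,
    Matrix.single_mul_single_same, add_zero, zero_add, zero_mul, mul_zero]
  simp only [stdBasisMatrix_neg, neg_mul, mul_neg, neg_neg]
  abel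

/-- Membership propagation by commutators. -/
lemma step_mem {R : Type*} [CommRing R] (H : Subgroup (Matrix.SpecialLinearGroup (Fin 3) R))
    (i j k : Fin 3) (hij : i ≠ j) (hjk : j ≠ k) (hik : i ≠ k) (α β : R)
    (hα : elemSL i j hij α ∈ H) (hβ : elemSL j k hjk β ∈ H) :
    elemSL i k hik (α * β) ∈ H := by
  rw [elemSL_comm i j k hij hjk hik]
  have h1 : elemSL i j hij (-α) ∈ H := by rw [← elemSL_inv]; exact inv_mem hα
  have h2 : elemSL j k hjk (-β) ∈ H := by rw [← elemSL_inv]; exact inv_mem hβ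
  exact mul_mem (mul_mem (mul_mem h1 h2) hα) hβ

lemma exists_pow_eq {F : Type*} [Field F] [Fintype F]
    (h3 : ¬ (3 ∣ Fintype.card F - 1)) (t : Fˣ) (ht : Subgroup.zpowers t = ⊤)
    (r : ℕ) (hr3 : r ≤ 3) (u : Fˣ) : ∃ n : ℕ, u = t ^ (3 * n + r) := by
  classical
  have horder : orderOf t = Fintype.card Fˣ := by
    rw [orderOf_eq_card_of_forall_mem_zpowers (fun x => by rw [ht]; trivial),
      Nat.card_eq_fintype_card]
  have hcard : orderOf t = Fintype.card F - 1 := by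
    rw [horder, Fintype.card_units]
  set N := orderOf t with hN
  have hNdvd : ¬ (3 ∣ N) := by rw [hcard]; exact h3
  rcases Nat.lt_or_ge N 2 with hN1 | hN2
  · have hN1' : N = 1 := by
      have : 0 < N := orderOf_pos t
      omega
    have hc1 : Fintype.card Fˣ = 1 := by rw [← horder, hN1']
    have : Subsingleton Fˣ := Fintype.card_le_one_iff_subsingleton.mp (le_of_eq hc1)
    exact ⟨0, Subsingleton.elim _ _⟩
  · have hcop : Nat.Coprime 3 N := (Nat.Prime.coprime_iff_not_dvd Nat.prime_three).mpr hNdvd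
    obtain ⟨v, -, hv⟩ := Nat.exists_mul_mod_eq_one_of_coprime hcop hN2
    have hu : u ∈ Subgroup.zpowers t := by rw [ht]; trivial
    obtain ⟨m, hm⟩ := (mem_powers_iff_mem_zpowers).mpr hu
    set m' := m + 3 * N with hm'
    refine ⟨v * (m' - r), ?_⟩
    rw [← hm]
    symm
    rw [pow_eq_pow_iff_modEq]
    calc 3 * (v * (m' - r)) + r = 3 * v * (m' - r) + r := by ring_nf
    _ ≡ 1 * (m' - r) + r [MOD N] := by
        apply Nat.ModEq.add_right
        apply Nat.ModEq.mul_right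
        calc 3 * v ≡ 3 * v % N [MOD N] := (Nat.mod_modEq _ _).symm
        _ = 1 := hv
    _ = m' := by omega
    _ ≡ m [MOD N] := by
        apply Nat.ModEq.symm
        calc m ≡ m + 3 * N [MOD N] := by
              apply (Nat.modEq_iff_dvd' (by omega)).mpr
              simp
        _ = m' := rfl

lemma diagMat1 {F : Type*} [Field F] (a : F) (ha : a ≠ 0) :
    Matrix.diagonal ![a, a⁻¹, 1] =
      elemMat 0 1 a * elemMat 1 0 (-a⁻¹) * elemMat 0 1 a * elemMat 0 1 (-1) *
        elemMat 1 0 1 * elemMat 0 1 (-1) := by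
  ext i j
  fin_cases i <;> fin_cases j <;>
    simp [elemMat, Matrix.mul_apply, Fin.sum_univ_three, Matrix.single,
      Matrix.one_apply, Matrix.diagonal] <;> field_simp <;> ring

lemma diagMat2 {F : Type*} [Field F] (a : F) (ha : a ≠ 0) :
    Matrix.diagonal ![1, a, a⁻¹] =
      elemMat 1 2 a * elemMat 2 1 (-a⁻¹) * elemMat 1 2 a * elemMat 1 2 (-1) *
        elemMat 2 1 1 * elemMat 1 2 (-1) := by
  ext i j
  fin_cases i <;> fin_cases j <;>
    simp [elemMat, Matrix.mul_apply, Fin.sum_univ_three, Matrix.single,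
      Matrix.one_apply, Matrix.diagonal] <;> field_simp <;> ring


/-- If `F` is a finite field with `3 ∤ |F| − 1` and `t` generates the multiplicative
group `Fˣ`, then `e_{12}(t)`, `e_{23}(t)` and `e_{31}(t)` generate all of `SL₃(F)`. -/
theorem elem_generate_SL3 {F : Type*} [Field F] [Fintype F]
    (h3 : ¬ (3 ∣ Fintype.card F - 1)) (t : Fˣ) (ht : Subgroup.zpowers t = ⊤) :
    Subgroup.closure
        ({elemSL 0 1 (by decide) (t : F), elemSL 1 2 (by decide) (t : F),
          elemSL 2 0 (by decide) (t : F)} :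
          Set (Matrix.SpecialLinearGroup (Fin 3) F)) = ⊤ := by
  classical
  set H := Subgroup.closure
        ({elemSL 0 1 (by decide) (t : F), elemSL 1 2 (by decide) (t : F),
          elemSL 2 0 (by decide) (t : F)} :
          Set (Matrix.SpecialLinearGroup (Fin 3) F)) with hH
  have h01 : (0 : Fin 3) ≠ 1 := by decide
  have h12 : (1 : Fin 3) ≠ 2 := by decide
  have h20 : (2 : Fin 3) ≠ 0 := by decide
  have h02 : (0 : Fin 3) ≠ 2 := by decide
  have h10 : (1 : Fin 3) ≠ 0 := by decide
  have h21 : (2 : Fin 3) ≠ 1 := by decide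
  -- generators
  have g01 : elemSL 0 1 h01 (t : F) ∈ H := Subgroup.subset_closure (by left; rfl)
  have g12 : elemSL 1 2 h12 (t : F) ∈ H := Subgroup.subset_closure (by right; left; rfl)
  have g20 : elemSL 2 0 h20 (t : F) ∈ H := Subgroup.subset_closure (by right; right; rfl)
  -- squares
  have s02 : elemSL 0 2 h02 ((t : F) ^ 2) ∈ H := by
    rw [pow_two]; exact step_mem H 0 1 2 h01 h12 h02 _ _ g01 g12
  have s10 : elemSL 1 0 h10 ((t : F) ^ 2) ∈ H := by
    rw [pow_two]; exact step_mem H 1 2 0 h12 h20 h10 _ _ g12 g20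
  have s21 : elemSL 2 1 h21 ((t : F) ^ 2) ∈ H := by
    rw [pow_two]; exact step_mem H 2 0 1 h20 h01 h21 _ _ g20 g01
  -- induction on powers
  have key : ∀ n : ℕ,
      (elemSL 0 1 h01 ((t : F) ^ (3 * n + 1)) ∈ H ∧
       elemSL 1 2 h12 ((t : F) ^ (3 * n + 1)) ∈ H ∧
       elemSL 2 0 h20 ((t : F) ^ (3 * n + 1)) ∈ H) ∧
      (elemSL 0 2 h02 ((t : F) ^ (3 * n + 2)) ∈ H ∧
       elemSL 1 0 h10 ((t : F) ^ (3 * n + 2)) ∈ H ∧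
       elemSL 2 1 h21 ((t : F) ^ (3 * n + 2)) ∈ H) := by
    intro n
    induction n with
    | zero =>
      refine ⟨⟨?_, ?_, ?_⟩, ⟨?_, ?_, ?_⟩⟩ <;> simp only [Nat.mul_zero, Nat.zero_add, pow_one]
      exacts [g01, g12, g20, s02, s10, s21]
    | succ n ih =>
      obtain ⟨⟨i01, i12, i20⟩, ⟨i02, i10, i21⟩⟩ := ih
      have e1 : 3 * (n + 1) + 1 = (3 * n + 2) + 2 := by ring
      have e2 : 3 * (n + 1) + 2 = (3 * (n + 1) + 1) + 1 := by ring
      have j01 : elemSL 0 1 h01 ((t : F) ^ (3 * (n + 1) + 1)) ∈ H := by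
        rw [e1, pow_add]; exact step_mem H 0 2 1 h02 h21 h01 _ _ i02 s21
      have j12 : elemSL 1 2 h12 ((t : F) ^ (3 * (n + 1) + 1)) ∈ H := by
        rw [e1, pow_add]; exact step_mem H 1 0 2 h10 h02 h12 _ _ i10 s02
      have j20 : elemSL 2 0 h20 ((t : F) ^ (3 * (n + 1) + 1)) ∈ H := by
        rw [e1, pow_add]; exact step_mem H 2 1 0 h21 h10 h20 _ _ i21 s10
      refine ⟨⟨j01, j12, j20⟩, ⟨?_, ?_, ?_⟩⟩
      · rw [e2, pow_add, pow_one]; exact step_mem H 0 1 2 h01 h12 h02 _ _ j01 g12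
      · rw [e2, pow_add, pow_one]; exact step_mem H 1 2 0 h12 h20 h10 _ _ j12 g20
      · rw [e2, pow_add, pow_one]; exact step_mem H 2 0 1 h20 h01 h21 _ _ j20 g01
  -- every elementary matrix is in H
  have hall : ∀ (i j : Fin 3) (hij : i ≠ j) (α : F), elemSL i j hij α ∈ H := by
    have main : ∀ (i j : Fin 3) (hij : i ≠ j) (r : ℕ), r ≤ 3 →
        (∀ n : ℕ, elemSL i j hij ((t : F) ^ (3 * n + r)) ∈ H) →
        ∀ α : F, elemSL i j hij α ∈ H := by
      intro i j hij r hr3 hpow α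
      rcases eq_or_ne α 0 with rfl | hα
      · rw [elemSL_zero]; exact one_mem H
      · obtain ⟨u, hu⟩ := (isUnit_iff_ne_zero.mpr hα)
        obtain ⟨n, hn⟩ := exists_pow_eq h3 t ht r hr3 u
        have : (α : F) = (t : F) ^ (3 * n + r) := by
          rw [← hu, hn, Units.val_pow_eq_pow_val]
        rw [this]
        exact hpow n
    intro i j hij
    fin_cases i <;> fin_cases j <;> first
      | exact absurd rfl hij
      | exact main _ _ hij 1 (by norm_num) (fun n => (key n).1.1)
      | exact main _ _ hij 1 (by norm_num) (fun n => (key n).1.2.1)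
      | exact main _ _ hij 1 (by norm_num) (fun n => (key n).1.2.2)
      | exact main _ _ hij 2 (by norm_num) (fun n => (key n).2.1)
      | exact main _ _ hij 2 (by norm_num) (fun n => (key n).2.2.1)
      | exact main _ _ hij 2 (by norm_num) (fun n => (key n).2.2.2)
  -- diagonal det-1 matrices with inverse-pair shape are in H
  have d1mem : ∀ (a : F), a ≠ 0 → ∀ (h : (Matrix.diagonal ![a, a⁻¹, (1 : F)]).det = 1),
      (⟨Matrix.diagonal ![a, a⁻¹, (1 : F)], h⟩ : Matrix.SpecialLinearGroup (Fin 3) F) ∈ H := by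
    intro a ha h
    have heq : (⟨Matrix.diagonal ![a, a⁻¹, (1 : F)], h⟩ :
        Matrix.SpecialLinearGroup (Fin 3) F) =
        elemSL 0 1 h01 a * elemSL 1 0 h10 (-a⁻¹) * elemSL 0 1 h01 a * elemSL 0 1 h01 (-1) *
          elemSL 1 0 h10 1 * elemSL 0 1 h01 (-1) := by
      apply Subtype.ext
      exact diagMat1 a ha
    rw [heq]
    exact mul_mem (mul_mem (mul_mem (mul_mem (mul_mem (hall _ _ h01 a) (hall _ _ h10 _))
      (hall _ _ h01 a)) (hall _ _ h01 _)) (hall _ _ h10 _)) (hall _ _ h01 _)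
  have d2mem : ∀ (a : F), a ≠ 0 → ∀ (h : (Matrix.diagonal ![(1 : F), a, a⁻¹]).det = 1),
      (⟨Matrix.diagonal ![(1 : F), a, a⁻¹], h⟩ : Matrix.SpecialLinearGroup (Fin 3) F) ∈ H := by
    intro a ha h
    have heq : (⟨Matrix.diagonal ![(1 : F), a, a⁻¹], h⟩ :
        Matrix.SpecialLinearGroup (Fin 3) F) =
        elemSL 1 2 h12 a * elemSL 2 1 h21 (-a⁻¹) * elemSL 1 2 h12 a * elemSL 1 2 h12 (-1) *
          elemSL 2 1 h21 1 * elemSL 1 2 h12 (-1) := by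
      apply Subtype.ext
      exact diagMat2 a ha
    rw [heq]
    exact mul_mem (mul_mem (mul_mem (mul_mem (mul_mem (hall _ _ h12 a) (hall _ _ h21 _))
      (hall _ _ h12 a)) (hall _ _ h12 _)) (hall _ _ h21 _)) (hall _ _ h12 _)
  -- main induction on arbitrary SL₃ elements
  rw [eq_top_iff]
  intro M _
  have PM : ∃ h : (M : Matrix (Fin 3) (Fin 3) F).det = 1,
      (⟨(M : Matrix (Fin 3) (Fin 3) F), h⟩ : Matrix.SpecialLinearGroup (Fin 3) F) ∈ H := by
    apply Matrix.diagonal_transvection_induction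
      (fun N => ∃ h : N.det = 1, (⟨N, h⟩ : Matrix.SpecialLinearGroup (Fin 3) F) ∈ H)
    · -- diagonal case
      intro D hD
      rw [M.prop] at hD
      have hprod : D 0 * D 1 * D 2 = 1 := by
        rw [Matrix.det_diagonal, Fin.prod_univ_three] at hD
        exact hD
      have h0 : D 0 ≠ 0 := by
        intro h; rw [h] at hprod; simp at hprod
      have h1 : D 1 ≠ 0 := by
        intro h; rw [h] at hprod; simp at hprod
      have hb : D 0 * D 1 ≠ 0 := mul_ne_zero h0 h1
      have hD2 : D 2 = (D 0 * D 1)⁻¹ := by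
        field_simp
        linear_combination hprod
      have hvec : D = ![D 0, (D 0)⁻¹, (1 : F)] * ![(1 : F), D 0 * D 1, (D 0 * D 1)⁻¹] := by
        funext i
        fin_cases i
        · simp
        · simp only [Pi.mul_apply, Matrix.cons_val_one, Matrix.head_cons]
          simp [h0]
        · simp only [Pi.mul_apply]
          simp [hD2]
      have hsplit : Matrix.diagonal D =
          Matrix.diagonal ![D 0, (D 0)⁻¹, (1 : F)] *
            Matrix.diagonal ![(1 : F), D 0 * D 1, (D 0 * D 1)⁻¹] := by
        rw [Matrix.diagonal_mul_diagonal]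
        exact congrArg Matrix.diagonal hvec
      have hd1 : (Matrix.diagonal ![D 0, (D 0)⁻¹, (1 : F)]).det = 1 := by
        rw [Matrix.det_diagonal, Fin.prod_univ_three]
        simp [h0]
      have hd2 : (Matrix.diagonal ![(1 : F), D 0 * D 1, (D 0 * D 1)⁻¹]).det = 1 := by
        rw [Matrix.det_diagonal, Fin.prod_univ_three]
        simp [h0, h1]
        field_simp
      refine ⟨hD, ?_⟩
      have heq : (⟨Matrix.diagonal D, hD⟩ : Matrix.SpecialLinearGroup (Fin 3) F) =
          (⟨Matrix.diagonal ![D 0, (D 0)⁻¹, (1 : F)], hd1⟩ *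
            ⟨Matrix.diagonal ![(1 : F), D 0 * D 1, (D 0 * D 1)⁻¹], hd2⟩ :
            Matrix.SpecialLinearGroup (Fin 3) F) := by
        apply Subtype.ext
        exact hsplit
      rw [heq]
      exact mul_mem (d1mem _ h0 hd1) (d2mem _ hb hd2)
    · -- transvection case
      intro ts
      refine ⟨ts.det, ?_⟩
      have heq : (⟨ts.toMatrix, ts.det⟩ : Matrix.SpecialLinearGroup (Fin 3) F) =
          elemSL ts.i ts.j ts.hij ts.c := by
        apply Subtype.ext
        rfl
      rw [heq]
      exact hall _ _ ts.hij ts.c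
    · -- multiplication case
      rintro A B ⟨hA, mA⟩ ⟨hB, mB⟩
      refine ⟨by rw [Matrix.det_mul, hA, hB, mul_one], ?_⟩
      have heq : (⟨A * B, by rw [Matrix.det_mul, hA, hB, mul_one]⟩ :
          Matrix.SpecialLinearGroup (Fin 3) F) =
          (⟨A, hA⟩ * ⟨B, hB⟩ : Matrix.SpecialLinearGroup (Fin 3) F) := by
        apply Subtype.ext
        rfl
      rw [heq]
      exact mul_mem mA mB
  obtain ⟨h, hm⟩ := PM
  have : M = ⟨(M : Matrix (Fin 3) (Fin 3) F), h⟩ := Subtype.ext rfl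
  rw [this]
  exact hm
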